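/- arXiv:math/0702008 — 2 statements merged into one kernel-verified Lean document; each statement's English description precedes it below -/
import Mathlib

section
/- Let I₁, …, I_n be (possibly dependent) {0,1}-valued random variables on a common probability space with p_i := P(I_i = 1) ∈ (0, 1/3) for each i, and set W := Σ_{j=1}^n I_j and W^{(i)} := W − I_i. For each i and each integer l ≥ 1, set v_{il} := (−1)^{l+1}(p_i/(1−p_i))^l. Then for every bounded function g : ℤ₊ → ℝ and each i, both series below converge absolutely and Σ_{l=1}^∞ v_{il}·E[g(W+l)] − E[I_i·g(W)] = Σ_{l=1}^∞ v_{il}·( E[g(W^{(i)}+l)] − p_i⁻¹·E[I_i·g(W^{(i)}+l)] ). -/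
open MeasureTheory

noncomputable section

private lemma summ_aux (q : ℝ) (h0 : 0 ≤ q) (h1 : q < 1) (v : ℕ → ℝ)
    (hv : ∀ l, |v l| ≤ q ^ l) (F : ℕ → ℝ) (K : ℝ) (hF : ∀ l, |F l| ≤ K) :
    Summable (fun l => |v (l + 1) * F l|) := by
  have hgeo : Summable (fun l : ℕ => q ^ (l + 1) * K) := by
    refine ((summable_geometric_of_lt_one h0 h1).mul_left (q * K)).congr fun l => ?_
    ring
  refine Summable.of_nonneg_of_le (fun l => abs_nonneg _) (fun l => ?_) hgeo
  rw [abs_mul]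
  exact mul_le_mul (hv _) (hF l) (abs_nonneg _) (pow_nonneg h0 _)

private lemma series_id (p q : ℝ) (hp : p ≠ 0) (h1p : (1 : ℝ) - p ≠ 0)
    (hq : q = p / (1 - p)) (h0 : 0 ≤ q) (h1 : q < 1)
    (A B : ℕ → ℝ) (C : ℝ) (hA : ∀ l, |A l| ≤ C) (hB : ∀ l, |B l| ≤ C)
    (v : ℕ → ℝ) (hv : ∀ l, v l = (-1 : ℝ) ^ (l + 1) * q ^ l) :
    (∑' l : ℕ, v (l + 1) * (A l - B l + B (l + 1))) - B 0
      = ∑' l : ℕ, v (l + 1) * (A l - p⁻¹ * B l) := by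
  have hvabs : ∀ l, |v l| ≤ q ^ l := by
    intro l
    rw [hv, abs_mul, abs_pow, abs_pow, abs_neg, abs_one, one_pow, one_mul,
      abs_of_nonneg h0]
  have sA : Summable (fun l => v (l + 1) * A l) :=
    Summable.of_abs (summ_aux q h0 h1 v hvabs A C hA)
  have sB : Summable (fun l => v (l + 1) * B l) :=
    Summable.of_abs (summ_aux q h0 h1 v hvabs B C hB)
  have sB' : Summable (fun l => v (l + 1) * B (l + 1)) :=
    Summable.of_abs (summ_aux q h0 h1 v hvabs (fun l => B (l + 1)) C (fun l => hB _))
  have hc : (1 - p⁻¹) * q = -1 := by rw [hq]; field_simp; ring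
  have hkey : (1 - p⁻¹) * (∑' l : ℕ, v (l + 1) * B l)
      = -B 0 + ∑' l : ℕ, v (l + 1) * B (l + 1) := by
    rw [← tsum_mul_left, Summable.tsum_eq_zero_add (sB.mul_left _)]
    congr 1
    · have hv1 : v 1 = q := by rw [hv]; norm_num
      rw [hv1]
      linear_combination B 0 * hc
    · refine tsum_congr fun n => ?_
      have hshift : (1 - p⁻¹) * v (n + 1 + 1) = v (n + 1) := by
        rw [hv (n + 1 + 1), hv (n + 1)]
        linear_combination ((-1 : ℝ) ^ (n + 3) * q ^ (n + 1)) * hc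
      rw [← hshift]; ring
  have hL : (∑' l : ℕ, v (l + 1) * (A l - B l + B (l + 1)))
      = (∑' l : ℕ, v (l + 1) * A l) - (∑' l : ℕ, v (l + 1) * B l)
        + (∑' l : ℕ, v (l + 1) * B (l + 1)) := by
    rw [← Summable.tsum_sub sA sB, ← Summable.tsum_add (sA.sub sB) sB']
    exact tsum_congr fun l => by ring
  have hR : (∑' l : ℕ, v (l + 1) * (A l - p⁻¹ * B l))
      = (∑' l : ℕ, v (l + 1) * A l) - p⁻¹ * (∑' l : ℕ, v (l + 1) * B l) := by
    rw [← tsum_mul_left, ← Summable.tsum_sub sA ((sB.mul_left p⁻¹).congr fun l => by ring)]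
    exact tsum_congr fun l => by ring
  rw [hL, hR]
  linear_combination -hkey

theorem stmt18 {Ω : Type*} [MeasurableSpace Ω] (P : Measure Ω) [IsProbabilityMeasure P]
    (n : ℕ) (I : Fin n → Ω → ℕ)
    (hmeas : ∀ i, Measurable (I i)) (h01 : ∀ i ω, I i ω ≤ 1)
    (p : Fin n → ℝ)
    (hp : ∀ i, (P {ω | I i ω = 1}).toReal = p i)
    (hp0 : ∀ i, 0 < p i) (hp3 : ∀ i, p i < 1 / 3)
    (W : Ω → ℕ) (hW : ∀ ω, W ω = ∑ j, I j ω)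
    (Wi : Fin n → Ω → ℕ) (hWi : ∀ i ω, Wi i ω = W ω - I i ω)
    -- v_{il} = (-1)^{l+1} (p_i/(1-p_i))^l, for l ≥ 1
    (v : Fin n → ℕ → ℝ) (hv : ∀ i l, v i l = (-1 : ℝ) ^ (l + 1) * (p i / (1 - p i)) ^ l)
    (g : ℕ → ℝ) (C : ℝ) (hg : ∀ k, |g k| ≤ C) (i : Fin n) :
    -- both series converge absolutely ...
    Summable (fun l : ℕ => |v i (l + 1) * ∫ ω, g (W ω + (l + 1)) ∂P|) ∧
    Summable (fun l : ℕ =>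
      |v i (l + 1) * ((∫ ω, g (Wi i ω + (l + 1)) ∂P)
        - (p i)⁻¹ * ∫ ω, (I i ω : ℝ) * g (Wi i ω + (l + 1)) ∂P)|) ∧
    -- ... and Σ_{l≥1} v_{il} E[g(W+l)] - E[I_i g(W)]
    --     = Σ_{l≥1} v_{il} (E[g(W⁽ⁱ⁾+l)] - p_i⁻¹ E[I_i g(W⁽ⁱ⁾+l)])
    (∑' l : ℕ, v i (l + 1) * ∫ ω, g (W ω + (l + 1)) ∂P)
        - (∫ ω, (I i ω : ℝ) * g (W ω) ∂P)
      = ∑' l : ℕ, v i (l + 1) * ((∫ ω, g (Wi i ω + (l + 1)) ∂P)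
          - (p i)⁻¹ * ∫ ω, (I i ω : ℝ) * g (Wi i ω + (l + 1)) ∂P) := by
  have hpi0 := hp0 i
  have hpi3 := hp3 i
  have h1p : (0 : ℝ) < 1 - p i := by linarith
  set q : ℝ := p i / (1 - p i) with hqdef
  have hq0 : 0 ≤ q := div_nonneg hpi0.le h1p.le
  have hq1 : q < 1 := by rw [hqdef, div_lt_one h1p]; linarith
  have hC0 : (0 : ℝ) ≤ C := le_trans (abs_nonneg _) (hg 0)
  -- measurability
  have hWm : Measurable W := by
    have hWf : W = fun ω => ∑ j, I j ω := funext hW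
    rw [hWf]; exact Finset.measurable_sum _ fun j _ => hmeas j
  have hWim : Measurable (Wi i) := by
    have hWif : Wi i = fun ω => W ω - I i ω := funext (hWi i)
    rw [hWif]; exact hWm.sub (hmeas i)
  have hgmeas : Measurable g := measurable_from_top
  -- integrability helpers
  have hInt : ∀ f : Ω → ℕ, Measurable f → Integrable (fun ω => g (f ω)) P := by
    intro f hf
    refine (integrable_const C).mono' (hgmeas.comp hf).aestronglyMeasurable ?_
    exact ae_of_all _ fun ω => by simpa [Real.norm_eq_abs] using hg (f ω)
  have hIb : ∀ ω, |(I i ω : ℝ)| ≤ 1 := by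
    intro ω
    rw [abs_of_nonneg (Nat.cast_nonneg _)]
    exact_mod_cast h01 i ω
  have hIgb : ∀ (f : Ω → ℕ) ω, |(I i ω : ℝ) * g (f ω)| ≤ C := by
    intro f ω
    calc |(I i ω : ℝ) * g (f ω)| = |(I i ω : ℝ)| * |g (f ω)| := abs_mul _ _
      _ ≤ 1 * C := mul_le_mul (hIb ω) (hg _) (abs_nonneg _) one_pos.le
      _ = C := one_mul C
  have hIntI : ∀ f : Ω → ℕ, Measurable f →
      Integrable (fun ω => (I i ω : ℝ) * g (f ω)) P := by
    intro f hf
    refine (integrable_const C).mono'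
      (((measurable_from_top.comp (hmeas i)).mul (hgmeas.comp hf)).aestronglyMeasurable) ?_
    exact ae_of_all _ fun ω => by rw [Real.norm_eq_abs]; exact hIgb f ω
  -- integral bounds
  have habs_int : ∀ f : Ω → ℝ, (∀ ω, |f ω| ≤ C) → |∫ ω, f ω ∂P| ≤ C := by
    intro f hf
    have h := norm_integral_le_of_norm_le_const (f := f) (μ := P) (C := C)
      (ae_of_all _ fun ω => by rw [Real.norm_eq_abs]; exact hf ω)
    simpa [Real.norm_eq_abs] using h
  have hvabs : ∀ l, |v i l| ≤ q ^ l := by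
    intro l
    rw [hv, ← hqdef, abs_mul, abs_pow, abs_pow, abs_neg, abs_one, one_pow, one_mul,
      abs_of_nonneg hq0]
  -- the two summability claims
  refine ⟨?_, ?_, ?_⟩
  · exact summ_aux q hq0 hq1 (v i) hvabs _ C
      (fun l => habs_int _ fun ω => hg _)
  · refine summ_aux q hq0 hq1 (v i) hvabs _ (C + (p i)⁻¹ * C) (fun l => ?_)
    have h1 : |∫ ω, g (Wi i ω + (l + 1)) ∂P| ≤ C := habs_int _ fun ω => hg _
    have h2 : |∫ ω, (I i ω : ℝ) * g (Wi i ω + (l + 1)) ∂P| ≤ C :=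
      habs_int (fun ω => (I i ω : ℝ) * g (Wi i ω + (l + 1)))
        (fun ω => hIgb (fun ω => Wi i ω + (l + 1)) ω)
    have hpinv : (0 : ℝ) ≤ (p i)⁻¹ := inv_nonneg.mpr hpi0.le
    calc |(∫ ω, g (Wi i ω + (l + 1)) ∂P)
          - (p i)⁻¹ * ∫ ω, (I i ω : ℝ) * g (Wi i ω + (l + 1)) ∂P|
        ≤ |∫ ω, g (Wi i ω + (l + 1)) ∂P|
          + |(p i)⁻¹ * ∫ ω, (I i ω : ℝ) * g (Wi i ω + (l + 1)) ∂P| := abs_sub _ _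
      _ ≤ C + (p i)⁻¹ * C := by
          rw [abs_mul, abs_of_nonneg hpinv]
          exact add_le_add h1 (mul_le_mul_of_nonneg_left h2 hpinv)
  -- the main identity
  · have hWeq : ∀ ω, W ω = Wi i ω + I i ω := by
      intro ω
      have hle : I i ω ≤ W ω := by
        rw [hW]
        exact Finset.single_le_sum (f := fun j => I j ω)
          (fun j _ => Nat.zero_le _) (Finset.mem_univ i)
      rw [hWi i ω, Nat.sub_add_cancel hle]
    have key : ∀ (l : ℕ) ω, g (W ω + l)
        = g (Wi i ω + l) - (I i ω : ℝ) * g (Wi i ω + l)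
          + (I i ω : ℝ) * g (Wi i ω + l + 1) := by
      intro l ω
      rcases Nat.le_one_iff_eq_zero_or_eq_one.mp (h01 i ω) with h | h
      · rw [hWeq ω, h]; simp
      · have hn : Wi i ω + I i ω + l = Wi i ω + l + 1 := by omega
        rw [hWeq ω, hn, h]
        simp
    have hsplit : ∀ l : ℕ, (∫ ω, g (W ω + (l + 1)) ∂P)
        = (∫ ω, g (Wi i ω + (l + 1)) ∂P)
          - (∫ ω, (I i ω : ℝ) * g (Wi i ω + (l + 1)) ∂P)
          + (∫ ω, (I i ω : ℝ) * g (Wi i ω + (l + 1 + 1)) ∂P) := by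
      intro l
      have h1 : Integrable (fun ω => g (Wi i ω + (l + 1))) P :=
        hInt (fun ω => Wi i ω + (l + 1)) (hWim.add_const _)
      have h2 : Integrable (fun ω => (I i ω : ℝ) * g (Wi i ω + (l + 1))) P :=
        hIntI (fun ω => Wi i ω + (l + 1)) (hWim.add_const _)
      have h3 : Integrable (fun ω => (I i ω : ℝ) * g (Wi i ω + (l + 1 + 1))) P :=
        hIntI (fun ω => Wi i ω + (l + 1 + 1)) (hWim.add_const _)
      have h12 : Integrable (fun ω => g (Wi i ω + (l + 1))
          - (I i ω : ℝ) * g (Wi i ω + (l + 1))) P := h1.sub h2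
      rw [← integral_sub h1 h2, ← integral_add h12 h3]
      refine integral_congr_ae (ae_of_all _ fun ω => ?_)
      show g (W ω + (l + 1)) = g (Wi i ω + (l + 1)) - (I i ω : ℝ) * g (Wi i ω + (l + 1))
          + (I i ω : ℝ) * g (Wi i ω + (l + 1 + 1))
      have := key (l + 1) ω
      simpa [add_assoc] using this
    have hB0 : (∫ ω, (I i ω : ℝ) * g (W ω) ∂P)
        = ∫ ω, (I i ω : ℝ) * g (Wi i ω + (0 + 1)) ∂P := by
      refine integral_congr_ae (ae_of_all _ fun ω => ?_)
      show (I i ω : ℝ) * g (W ω) = (I i ω : ℝ) * g (Wi i ω + (0 + 1))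
      rcases Nat.le_one_iff_eq_zero_or_eq_one.mp (h01 i ω) with h | h
      · rw [h]; simp
      · have hn : W ω = Wi i ω + (0 + 1) := by rw [hWeq ω, h]
        rw [hn]
    have hA : ∀ l : ℕ, |∫ ω, g (Wi i ω + (l + 1)) ∂P| ≤ C :=
      fun l => habs_int (fun ω => g (Wi i ω + (l + 1))) fun ω => hg _
    have hBb : ∀ l : ℕ, |∫ ω, (I i ω : ℝ) * g (Wi i ω + (l + 1)) ∂P| ≤ C :=
      fun l => habs_int (fun ω => (I i ω : ℝ) * g (Wi i ω + (l + 1)))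
        fun ω => hIgb (fun ω => Wi i ω + (l + 1)) ω
    have main := series_id (p i) q hpi0.ne' (by linarith) hqdef hq0 hq1
      (fun l => ∫ ω, g (Wi i ω + (l + 1)) ∂P)
      (fun l => ∫ ω, (I i ω : ℝ) * g (Wi i ω + (l + 1)) ∂P)
      C hA hBb (v i) (fun l => by rw [hv, hqdef])
    calc (∑' l : ℕ, v i (l + 1) * ∫ ω, g (W ω + (l + 1)) ∂P)
          - (∫ ω, (I i ω : ℝ) * g (W ω) ∂P)
        = (∑' l : ℕ, v i (l + 1) * ((∫ ω, g (Wi i ω + (l + 1)) ∂P)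
            - (∫ ω, (I i ω : ℝ) * g (Wi i ω + (l + 1)) ∂P)
            + (∫ ω, (I i ω : ℝ) * g (Wi i ω + (l + 1 + 1)) ∂P)))
          - (∫ ω, (I i ω : ℝ) * g (Wi i ω + (0 + 1)) ∂P) := by
          rw [← hB0]
          congr 1
          exact tsum_congr fun l => by rw [hsplit l]
      _ = ∑' l : ℕ, v i (l + 1) * ((∫ ω, g (Wi i ω + (l + 1)) ∂P)
            - (p i)⁻¹ * ∫ ω, (I i ω : ℝ) * g (Wi i ω + (l + 1)) ∂P) := main

end
end

section
/- Let I₁, …, I_n be (possibly dependent) {0,1}-valued random variables on a common probability space with p_i := P(I_i = 1) ∈ (0, 1/3) for each i, and set W := Σ_{j=1}^n I_j and W^{(i)} := W − I_i. For each i, let W̃^{(i)} be a random variable defined on the same probability space whose distribution equals the conditional distribution of W^{(i)} given I_i = 1, and set η₁ := Σ_{i=1}^n (p_i/(1−2p_i))·E|W̃^{(i)} − W^{(i)}|. For integers l ≥ 1 define λ_{1l} := ((−1)^{l+1}/l)·Σ_{i=1}^n (p_i/(1−p_i))^l. Then for every bounded function g : ℤ₊ → ℝ, | Σ_{l=1}^∞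 l·λ_{1l}·E[g(W+l)] − E[W·g(W)] | ≤ η₁·‖Δg‖_∞, where ‖Δg‖_∞ := sup_{j≥0} |g(j+1) − g(j)|. -/
open MeasureTheory

noncomputable section


-- integrability of bounded measurable
lemma myIntBdd {Ω : Type*} [MeasurableSpace Ω] (μ : Measure Ω) [IsFiniteMeasure μ]
    (f : Ω → ℝ) (hf : AEStronglyMeasurable f μ) (C : ℝ) (h : ∀ᵐ ω ∂μ, |f ω| ≤ C) :
    Integrable f μ :=
  (integrable_const C).mono' hf (by simpa [Real.norm_eq_abs] using h)

lemma myIntTsum {Ω : Type*} [MeasurableSpace Ω] (μ : Measure Ω) [IsFiniteMeasure μ]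
    (X : Ω → ℕ) (hX : Measurable X) (h : ℕ → ℝ) (C : ℝ) (hC : ∀ k, |h k| ≤ C) :
    ∫ ω, h (X ω) ∂μ = ∑' k : ℕ, (μ {ω | X ω = k}).toReal * h k := by
  have hmeash : Measurable h := measurable_from_nat
  have h1 : ∫ ω, h (X ω) ∂μ = ∫ k, h k ∂(μ.map X) :=
    (integral_map hX.aemeasurable hmeash.aestronglyMeasurable).symm
  have hint : Integrable h (μ.map X) := by
    refine myIntBdd _ _ hmeash.aestronglyMeasurable C (Filter.Eventually.of_forall hC)
  rw [h1, integral_countable' hint]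
  refine tsum_congr fun k => ?_
  rw [measureReal_def, Measure.map_apply hX (measurableSet_singleton k)]
  simp [Set.preimage, smul_eq_mul]

lemma myLip (g : ℕ → ℝ) (D : ℝ) (hD : ∀ j, |g (j+1) - g j| ≤ D) :
    ∀ a b : ℕ, |g a - g b| ≤ D * |(a:ℝ) - (b:ℝ)| := by
  have hD0 : 0 ≤ D := le_trans (abs_nonneg _) (hD 0)
  have key : ∀ k a : ℕ, |g (a + k) - g a| ≤ D * k := by
    intro k
    induction k with
    | zero => simp
    | succ m ih =>
      intro a
      have h1 : g (a + (m+1)) - g a = (g ((a+m) + 1) - g (a+m)) + (g (a+m) - g a) := by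
        have : a + (m+1) = (a+m)+1 := by omega
        rw [this]; ring
      calc |g (a + (m+1)) - g a| ≤ |g ((a+m)+1) - g (a+m)| + |g (a+m) - g a| := by
            rw [h1]; exact abs_add_le _ _
        _ ≤ D + D * m := add_le_add (hD _) (ih a)
        _ = D * (m+1 : ℕ) := by push_cast; ring
  intro a b
  rcases le_total b a with hba | hab
  · have : a = b + (a - b) := by omega
    calc |g a - g b| = |g (b + (a-b)) - g b| := by rw [← this]
      _ ≤ D * ((a - b : ℕ) : ℝ) := key _ _
      _ = D * |(a:ℝ) - b| := by
          rw [Nat.cast_sub hba, abs_of_nonneg (by push_cast; exact sub_nonneg.mpr (by exact_mod_cast hba))]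
  · have h' : b = a + (b - a) := by omega
    calc |g a - g b| = |g (a + (b-a)) - g a| := by rw [← h', abs_sub_comm]
      _ ≤ D * ((b - a : ℕ) : ℝ) := key _ _
      _ = D * |(a:ℝ) - b| := by
          rw [Nat.cast_sub hab, abs_sub_comm, abs_of_nonneg (by push_cast; exact sub_nonneg.mpr (by exact_mod_cast hab))]

lemma mySummable (θ C : ℝ) (h0 : 0 ≤ θ) (h1 : θ < 1) (x : ℕ → ℝ) (hx : ∀ l, |x l| ≤ C) :
    Summable (fun l : ℕ => ((-1:ℝ)^(l+1+1) * θ^(l+1)) * x l) := by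
  refine Summable.of_norm ?_
  refine Summable.of_nonneg_of_le (fun l => norm_nonneg _) (fun l => ?_)
    ((summable_geometric_of_lt_one h0 h1).mul_left (θ * C))
  have : ‖(-1:ℝ)^(l+1+1) * θ^(l+1) * x l‖ = θ^(l+1) * |x l| := by
    rw [Real.norm_eq_abs, abs_mul, abs_mul, abs_pow, abs_neg, abs_one, one_pow, one_mul,
      abs_of_nonneg (pow_nonneg h0 _)]
  rw [this, pow_succ']
  have hCnn : 0 ≤ C := le_trans (abs_nonneg _) (hx 0)
  calc θ * θ ^ l * |x l| ≤ θ * θ ^ l * C := by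
        exact mul_le_mul_of_nonneg_left (hx l) (by positivity)
    _ = θ * C * θ ^ l := by ring

lemma myKey {Ω : Type*} [MeasurableSpace Ω] (P : Measure Ω) [IsProbabilityMeasure P]
    (I W Wi Wt : Ω → ℕ)
    (hImeas : Measurable I) (hWmeas : Measurable W) (hWimeas : Measurable Wi)
    (hWtmeas : Measurable Wt)
    (hI01 : ∀ ω, I ω ≤ 1) (hIW : ∀ ω, W ω = Wi ω + I ω)
    (N : ℕ) (hWiN : ∀ ω, Wi ω ≤ N)
    (p : ℝ) (hp : (P {ω | I ω = 1}).toReal = p) (hp0 : 0 < p) (hp3 : p < 1/3)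
    (hWt : ∀ k, P {ω | Wt ω = k} = P ({ω | Wi ω = k} ∩ {ω | I ω = 1}) / P {ω | I ω = 1})
    (g : ℕ → ℝ) (C : ℝ) (hg : ∀ k, |g k| ≤ C)
    (D : ℝ) (hD : ∀ j, |g (j+1) - g j| ≤ D) :
    |(∑' l : ℕ, ((-1:ℝ)^(l+1+1) * (p/(1-p))^(l+1)) * ∫ ω, g (W ω + (l+1)) ∂P)
       - ∫ ω, (I ω : ℝ) * g (W ω) ∂P|
      ≤ p / (1 - 2*p) * (∫ ω, |(Wt ω : ℝ) - (Wi ω : ℝ)| ∂P) * D := by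
  have hC0 : 0 ≤ C := le_trans (abs_nonneg _) (hg 0)
  have hD0 : 0 ≤ D := le_trans (abs_nonneg _) (hD 0)
  have hp1 : (0:ℝ) < 1 - p := by linarith
  have hp2 : (0:ℝ) < 1 - 2*p := by linarith
  set θ : ℝ := p / (1 - p) with hθ
  have hθ0 : 0 < θ := div_pos hp0 hp1
  have hθ1 : θ < 1 := by rw [hθ, div_lt_one hp1]; linarith
  set A : Set Ω := {ω | I ω = 1} with hA
  have hAmeas : MeasurableSet A := hImeas (measurableSet_singleton 1)
  have hPA_ne_top : P A ≠ ⊤ := measure_ne_top P A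
  have hPA_ne_zero : P A ≠ 0 := by
    intro h
    rw [hA] at hp
    rw [h] at hp
    simp at hp
    exact absurd hp (ne_of_gt hp0).symm
  -- integrability of bounded composites
  have hint : ∀ (X : Ω → ℕ) (_ : Measurable X) (m : ℕ),
      Integrable (fun ω => g (X ω + m)) P := by
    intro X hX m
    exact myIntBdd P _ ((measurable_from_nat (f := fun k => g (k+m))).comp hX).aestronglyMeasurable
      C (Filter.Eventually.of_forall fun ω => hg _)
  -- a, b, c, t
  set a : ℕ → ℝ := fun m => ∫ ω, g (W ω + m) ∂P with ha
  set c : ℕ → ℝ := fun m => ∫ ω, g (Wi ω + m) ∂P with hc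
  set t : ℕ → ℝ := fun m => ∫ ω, g (Wt ω + m) ∂P with ht
  set b : ℕ → ℝ := fun m => ∫ ω in A, g (Wi ω + m) ∂P with hb
  have habs : ∀ (X : Ω → ℕ) (m : ℕ), |∫ ω, g (X ω + m) ∂P| ≤ C := by
    intro X m
    calc |∫ ω, g (X ω + m) ∂P| = ‖∫ ω, g (X ω + m) ∂P‖ := (Real.norm_eq_abs _).symm
      _ ≤ C * (P Set.univ).toReal := by
          refine norm_integral_le_of_norm_le_const (Filter.Eventually.of_forall fun ω => ?_)
          rw [Real.norm_eq_abs]; exact hg _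
      _ = C := by simp
  have hbabs : ∀ m, |b m| ≤ C := by
    intro m
    calc |b m| = ‖∫ ω in A, g (Wi ω + m) ∂P‖ := (Real.norm_eq_abs _).symm
      _ ≤ C * (P.restrict A Set.univ).toReal := by
          refine norm_integral_le_of_norm_le_const (Filter.Eventually.of_forall fun ω => ?_)
          rw [Real.norm_eq_abs]; exact hg _
      _ ≤ C * 1 := by
          refine mul_le_mul_of_nonneg_left ?_ hC0
          rw [Measure.restrict_apply_univ]
          exact ENNReal.toReal_le_of_le_ofReal one_pos.le (by simpa using prob_le_one)
      _ = C := mul_one C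
  -- F1 : a m = (c m - b m) + b (m+1)
  have hF1 : ∀ m : ℕ, a m = (c m - b m) + b (m+1) := by
    intro m
    have hsplit : ∫ ω, g (W ω + m) ∂P
        = (∫ ω in A, g (W ω + m) ∂P) + ∫ ω in Aᶜ, g (W ω + m) ∂P :=
      (integral_add_compl hAmeas (hint W hWmeas m)).symm
    have hsplit2 : ∫ ω, g (Wi ω + m) ∂P
        = (∫ ω in A, g (Wi ω + m) ∂P) + ∫ ω in Aᶜ, g (Wi ω + m) ∂P :=
      (integral_add_compl hAmeas (hint Wi hWimeas m)).symm
    have hOnA : ∫ ω in A, g (W ω + m) ∂P = b (m+1) := by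
      refine setIntegral_congr_fun hAmeas fun ω hω => ?_
      have : I ω = 1 := hω
      rw [hIW ω, this]
      congr 1
      omega
    have hOnAc : ∫ ω in Aᶜ, g (W ω + m) ∂P = ∫ ω in Aᶜ, g (Wi ω + m) ∂P := by
      refine setIntegral_congr_fun hAmeas.compl fun ω hω => ?_
      have h0 : I ω = 0 := by
        have := hI01 ω
        have : I ω ≠ 1 := hω
        omega
      rw [hIW ω, h0]
      norm_num
    rw [ha]
    simp only
    rw [hsplit, hOnA, hOnAc]
    have : ∫ ω in Aᶜ, g (Wi ω + m) ∂P = c m - b m := by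
      rw [hc, hb]; simp only; linarith [hsplit2]
    rw [this]; ring
  -- F2 : b m = p * t m
  have hF2 : ∀ m : ℕ, b m = p * t m := by
    intro m
    have hbm : b m = ∑' k : ℕ, (P ({ω | Wi ω = k} ∩ A)).toReal * g (k + m) := by
      rw [hb]
      simp only
      rw [myIntTsum (P.restrict A) Wi hWimeas (fun k => g (k+m)) C (fun k => hg _)]
      refine tsum_congr fun k => ?_
      rw [Measure.restrict_apply (show MeasurableSet {ω | Wi ω = k} from hWimeas (measurableSet_singleton k))]
    have htm : t m = ∑' k : ℕ, (P {ω | Wt ω = k}).toReal * g (k + m) := by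
      rw [ht]
      simp only
      exact myIntTsum P Wt hWtmeas (fun k => g (k+m)) C (fun k => hg _)
    rw [hbm, htm, ← tsum_mul_left]
    refine tsum_congr fun k => ?_
    rw [hWt k]
    rw [ENNReal.toReal_div]
    rw [hp]
    field_simp
  -- Wt a.e. bounded, integrability of |Wt - Wi|
  have hWtae : ∀ᵐ ω ∂P, Wt ω ≤ N := by
    have hnull : ∀ k : ℕ, P {ω | Wt ω = N + 1 + k} = 0 := by
      intro k
      rw [hWt (N+1+k)]
      have : {ω | Wi ω = N + 1 + k} = ∅ := by
        ext ω; simp only [Set.mem_setOf_eq, Set.mem_empty_iff_false, iff_false]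
        have := hWiN ω; omega
      rw [this]
      simp
    have : P {ω | ¬ Wt ω ≤ N} = 0 := by
      have hsub : {ω | ¬ Wt ω ≤ N} ⊆ ⋃ k : ℕ, {ω | Wt ω = N + 1 + k} := by
        intro ω hω
        simp only [Set.mem_setOf_eq, not_le] at hω
        exact Set.mem_iUnion.mpr ⟨Wt ω - (N+1), by simp only [Set.mem_setOf_eq]; omega⟩
      exact measure_mono_null hsub (measure_iUnion_null hnull)
    exact this
  have hMint : Integrable (fun ω => |(Wt ω : ℝ) - (Wi ω : ℝ)|) P := by
    refine myIntBdd P _ ?_ ((N:ℝ) + N) ?_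
    · refine (Measurable.abs ?_).aestronglyMeasurable
      exact ((measurable_from_nat (f := (Nat.cast : ℕ → ℝ))).comp hWtmeas).sub
        ((measurable_from_nat (f := (Nat.cast : ℕ → ℝ))).comp hWimeas)
    · filter_upwards [hWtae] with ω hω
      rw [abs_abs]
      have h1 : (Wt ω : ℝ) ≤ N := by exact_mod_cast hω
      have h2 : (Wi ω : ℝ) ≤ N := by exact_mod_cast hWiN ω
      have h3 : (0:ℝ) ≤ Wt ω := Nat.cast_nonneg _
      have h4 : (0:ℝ) ≤ Wi ω := Nat.cast_nonneg _
      rw [abs_sub_le_iff]; constructor <;> linarith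
  set M : ℝ := ∫ ω, |(Wt ω : ℝ) - (Wi ω : ℝ)| ∂P with hM
  have hM0 : 0 ≤ M := integral_nonneg fun ω => abs_nonneg _
  -- |c m - t m| ≤ D * M
  have hct : ∀ m : ℕ, |c m - t m| ≤ D * M := by
    intro m
    have hsub : c m - t m = ∫ ω, (g (Wi ω + m) - g (Wt ω + m)) ∂P :=
      (integral_sub (hint Wi hWimeas m) (hint Wt hWtmeas m)).symm
    rw [hsub]
    calc |∫ ω, (g (Wi ω + m) - g (Wt ω + m)) ∂P|
        ≤ ∫ ω, |g (Wi ω + m) - g (Wt ω + m)| ∂P := by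
          rw [← Real.norm_eq_abs]
          exact (norm_integral_le_integral_norm _).trans (le_of_eq (by simp [Real.norm_eq_abs]))
      _ ≤ ∫ ω, D * |(Wt ω : ℝ) - (Wi ω : ℝ)| ∂P := by
          refine integral_mono ((hint Wi hWimeas m).sub (hint Wt hWtmeas m)).abs
            (hMint.const_mul D) fun ω => ?_
          calc |g (Wi ω + m) - g (Wt ω + m)|
              ≤ D * |((Wi ω + m : ℕ) : ℝ) - ((Wt ω + m : ℕ) : ℝ)| := myLip g D hD _ _
            _ = D * |(Wt ω : ℝ) - (Wi ω : ℝ)| := by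
                rw [← abs_sub_comm]; push_cast; ring_nf
      _ = D * M := by rw [integral_const_mul]
  -- tsum manipulations
  set u : ℕ → ℝ := fun l => (-1:ℝ)^(l+1+1) * θ^(l+1) with hu
  have hu' : ∀ l, u l = (-1:ℝ)^l * θ^(l+1) := by
    intro l; rw [hu]; simp only; ring_nf
  have hsumm : ∀ (x : ℕ → ℝ), (∀ m, |x m| ≤ C) → Summable (fun l => u l * x (l+1)) :=
    fun x hx => mySummable θ C hθ0.le hθ1 (fun l => x (l+1)) (fun l => hx _)
  have hsa : Summable (fun l => u l * a (l+1)) := hsumm a (fun m => habs W m)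
  have hsc : Summable (fun l => u l * c (l+1)) := hsumm c (fun m => habs Wi m)
  have hst : Summable (fun l => u l * t (l+1)) := hsumm t (fun m => habs Wt m)
  have hsb : Summable (fun l => u l * b (l+1)) := hsumm b hbabs
  have hsb2 : Summable (fun l => u l * b (l+2)) := by
    have := hsumm (fun m => b (m+1)) (fun m => hbabs _)
    simpa using this
  set S : ℝ := ∑' l : ℕ, u l * a (l+1) with hS
  set T1 : ℝ := ∑' l : ℕ, u l * c (l+1) with hT1
  set T2 : ℝ := ∑' l : ℕ, u l * b (l+1) with hT2
  set T3 : ℝ := ∑' l : ℕ, u l * b (l+2) with hT3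
  set T4 : ℝ := ∑' l : ℕ, u l * t (l+1) with hT4
  have hS_split : S = (T1 - T2) + T3 := by
    rw [hS, hT1, hT2, hT3]
    rw [← Summable.tsum_sub hsc hsb, ← Summable.tsum_add (hsc.sub hsb) hsb2]
    refine tsum_congr fun l => ?_
    rw [hF1 (l+1)]
    ring
  have hushift : ∀ l : ℕ, u (l+1) = -θ * u l := by
    intro l
    rw [hu' (l+1), hu' l, pow_succ, pow_succ]
    ring
  have hθne : θ ≠ 0 := ne_of_gt hθ0
  have hT3eq : T3 = θ⁻¹ * (u 0 * b 1 - T2) := by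
    have h1 : T2 = u 0 * b (0+1) + ∑' l : ℕ, u (l+1) * b (l+1+1) := by
      rw [hT2]
      exact Summable.tsum_eq_zero_add hsb
    have h2 : ∑' l : ℕ, u (l+1) * b (l+1+1) = ∑' l : ℕ, (-θ) * (u l * b (l+2)) := by
      refine tsum_congr fun l => ?_
      rw [hushift l]; ring_nf
    rw [h2, tsum_mul_left, ← hT3] at h1
    rw [h1]
    field_simp
    ring
  have hu0 : u 0 = θ := by rw [hu' 0]; simp
  have hT2eq : T2 = p * T4 := by
    rw [hT2, hT4, ← tsum_mul_left]
    refine tsum_congr fun l => ?_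
    rw [hF2 (l+1)]; ring
  -- b 1 = ∫ I g(W)
  have hb1 : ∫ ω, (I ω : ℝ) * g (W ω) ∂P = b 1 := by
    have hpt : ∀ ω, (I ω : ℝ) * g (W ω) = A.indicator (fun ω => g (Wi ω + 1)) ω := by
      intro ω
      by_cases h : I ω = 1
      · have : ω ∈ A := h
        rw [Set.indicator_of_mem this, h, hIW ω, h]
        simp
      · have h0 : I ω = 0 := by have := hI01 ω; omega
        have : ω ∉ A := h
        rw [Set.indicator_of_notMem this, h0]
        simp
    rw [hb]
    simp only
    rw [show (fun ω => (I ω : ℝ) * g (W ω)) = A.indicator (fun ω => g (Wi ω + 1)) from funext hpt]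
    exact integral_indicator hAmeas
  -- final identity
  have hkey : S - b 1 = T1 - T4 := by
    have h1p : (1 + θ⁻¹) * p = 1 := by
      rw [hθ]
      field_simp
      ring
    rw [hS_split, hT3eq, hu0, hT2eq, hθ]
    field_simp
    ring_nf
    try tauto
  have hT14 : T1 - T4 = ∑' l : ℕ, u l * (c (l+1) - t (l+1)) := by
    rw [hT1, hT4, ← Summable.tsum_sub hsc hst]
    refine tsum_congr fun l => ?_
    ring
  -- bound
  have hgeo : Summable (fun l : ℕ => θ^(l+1) * (D * M)) := by
    refine Summable.mul_right _ ?_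
    have := (summable_geometric_of_lt_one hθ0.le hθ1).mul_left θ
    refine this.congr fun l => ?_
    rw [pow_succ']
  have hbound : |S - b 1| ≤ ∑' l : ℕ, θ^(l+1) * (D * M) := by
    rw [hkey, hT14]
    have hterm : ∀ l, ‖u l * (c (l+1) - t (l+1))‖ ≤ θ^(l+1) * (D * M) := by
      intro l
      rw [Real.norm_eq_abs, abs_mul, hu']
      have : |(-1:ℝ)^l * θ^(l+1)| = θ^(l+1) := by
        rw [abs_mul, abs_pow, abs_neg, abs_one, one_pow, one_mul,
          abs_of_nonneg (pow_nonneg hθ0.le _)]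
      rw [this]
      exact mul_le_mul_of_nonneg_left (hct _) (pow_nonneg hθ0.le _)
    have hscmt : Summable (fun l => u l * (c (l+1) - t (l+1))) :=
      (hsc.sub hst).congr (fun l => by ring)
    have hnorm : Summable (fun l => ‖u l * (c (l+1) - t (l+1))‖) := by
      simpa only [Real.norm_eq_abs] using hscmt.abs
    calc |∑' l : ℕ, u l * (c (l+1) - t (l+1))|
        ≤ ∑' l : ℕ, ‖u l * (c (l+1) - t (l+1))‖ := by
          rw [← Real.norm_eq_abs]
          exact norm_tsum_le_tsum_norm hnorm
      _ ≤ ∑' l : ℕ, θ^(l+1) * (D * M) := hnorm.tsum_le_tsum hterm hgeo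
  have hgeosum : ∑' l : ℕ, θ^(l+1) * (D * M) = θ / (1 - θ) * (D * M) := by
    rw [tsum_mul_right]
    congr 1
    have h1 : ∑' l : ℕ, θ^(l+1) = θ * ∑' l : ℕ, θ^l := by
      rw [← tsum_mul_left]
      exact tsum_congr fun l => by rw [pow_succ']
    rw [h1, tsum_geometric_of_lt_one hθ0.le hθ1]
    rw [div_eq_mul_inv]
  have hθfrac : θ / (1 - θ) = p / (1 - 2*p) := by
    rw [hθ]
    rw [div_eq_div_iff]
    · field_simp
      ring_nf
      try tauto
    · have h : 1 - p / (1-p) = (1 - 2*p)/(1-p) := by field_simp; ring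
      rw [h]
      exact ne_of_gt (by positivity)
    · exact hp2.ne'
  -- conclude
  have hfinal : |S - b 1| ≤ p / (1 - 2*p) * M * D := by
    calc |S - b 1| ≤ θ / (1 - θ) * (D * M) := hbound.trans (le_of_eq hgeosum)
      _ = p / (1 - 2*p) * M * D := by rw [hθfrac]; ring
  rw [hb1]
  convert hfinal using 3

theorem stmt19 {Ω : Type*} [MeasurableSpace Ω] (P : Measure Ω) [IsProbabilityMeasure P]
    (n : ℕ) (I : Fin n → Ω → ℕ)
    (hmeas : ∀ i, Measurable (I i)) (h01 : ∀ i ω, I i ω ≤ 1)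
    (p : Fin n → ℝ)
    (hp : ∀ i, (P {ω | I i ω = 1}).toReal = p i)
    (hp0 : ∀ i, 0 < p i) (hp3 : ∀ i, p i < 1 / 3)
    (W : Ω → ℕ) (hW : ∀ ω, W ω = ∑ j, I j ω)
    (Wi : Fin n → Ω → ℕ) (hWi : ∀ i ω, Wi i ω = W ω - I i ω)
    -- W̃⁽ⁱ⁾ has the conditional distribution of W⁽ⁱ⁾ given I_i = 1
    (Wt : Fin n → Ω → ℕ) (hWtmeas : ∀ i, Measurable (Wt i))
    (hWt : ∀ i (k : ℕ),
      P {ω | Wt i ω = k} = P ({ω | Wi i ω = k} ∩ {ω | I i ω = 1}) / P {ω | I i ω = 1})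
    -- η₁ = Σᵢ (pᵢ/(1-2pᵢ)) E|W̃⁽ⁱ⁾ - W⁽ⁱ⁾|
    (η₁ : ℝ)
    (hη₁ : η₁ = ∑ i, p i / (1 - 2 * p i) * ∫ ω, |(Wt i ω : ℝ) - (Wi i ω : ℝ)| ∂P)
    -- l·λ_{1l} = Σᵢ (-1)^{l+1} (pᵢ/(1-pᵢ))^l, for l ≥ 1
    (lLam : ℕ → ℝ)
    (hlLam : ∀ l : ℕ, lLam l = ∑ i, (-1 : ℝ) ^ (l + 1) * (p i / (1 - p i)) ^ l)
    (g : ℕ → ℝ) (C : ℝ) (hg : ∀ k, |g k| ≤ C)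
    (D : ℝ) (hD : ∀ j : ℕ, |g (j + 1) - g j| ≤ D) :
    -- | Σ_{l≥1} l λ_{1l} E[g(W+l)] - E[W g(W)] | ≤ η₁ ‖Δg‖_∞
    |(∑' l : ℕ, lLam (l + 1) * ∫ ω, g (W ω + (l + 1)) ∂P)
        - ∫ ω, (W ω : ℝ) * g (W ω) ∂P|
      ≤ η₁ * D := by
  have hC0 : 0 ≤ C := le_trans (abs_nonneg _) (hg 0)
  have hWmeas : Measurable W := by
    have : W = fun ω => ∑ j, I j ω := funext hW
    rw [this]
    exact Finset.measurable_sum _ fun j _ => hmeas j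
  have hIleW : ∀ i ω, I i ω ≤ W ω := fun i ω => by
    rw [hW ω]
    exact Finset.single_le_sum (f := fun j => I j ω) (fun j _ => Nat.zero_le _) (Finset.mem_univ i)
  have hIW : ∀ i ω, W ω = Wi i ω + I i ω := fun i ω => by
    have := hIleW i ω
    rw [hWi i ω]
    omega
  have hWimeas : ∀ i, Measurable (Wi i) := fun i => by
    have : Wi i = fun ω => W ω - I i ω := funext (hWi i)
    rw [this]
    exact hWmeas.sub (hmeas i)
  have hWiN : ∀ i ω, Wi i ω ≤ n := fun i ω => by
    have h1 : Wi i ω ≤ W ω := by rw [hWi i ω]; omega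
    refine h1.trans ?_
    rw [hW ω]
    calc ∑ j, I j ω ≤ ∑ _j : Fin n, 1 := Finset.sum_le_sum fun j _ => h01 j ω
      _ = n := by simp
  -- per-i quantities
  have hθ0 : ∀ i, (0:ℝ) < p i / (1 - p i) := fun i =>
    div_pos (hp0 i) (by linarith [hp3 i])
  have hθ1 : ∀ i, p i / (1 - p i) < 1 := fun i => by
    rw [div_lt_one (by linarith [hp3 i])]
    linarith [hp3 i]
  have habs : ∀ m : ℕ, |∫ ω, g (W ω + m) ∂P| ≤ C := by
    intro m
    calc |∫ ω, g (W ω + m) ∂P| = ‖∫ ω, g (W ω + m) ∂P‖ := (Real.norm_eq_abs _).symm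
      _ ≤ C * (P Set.univ).toReal := by
          refine norm_integral_le_of_norm_le_const (Filter.Eventually.of_forall fun ω => ?_)
          rw [Real.norm_eq_abs]; exact hg _
      _ = C := by simp
  have hsummi : ∀ i : Fin n, Summable (fun l : ℕ =>
      ((-1:ℝ)^(l+1+1) * (p i / (1 - p i))^(l+1)) * ∫ ω, g (W ω + (l+1)) ∂P) := by
    intro i
    exact mySummable _ C (hθ0 i).le (hθ1 i) _ (fun l => habs (l+1))
  -- rewrite the tsum
  have hts : (∑' l : ℕ, lLam (l + 1) * ∫ ω, g (W ω + (l + 1)) ∂P)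
      = ∑ i, ∑' l : ℕ, ((-1:ℝ)^(l+1+1) * (p i / (1 - p i))^(l+1)) * ∫ ω, g (W ω + (l+1)) ∂P := by
    rw [← Summable.tsum_finsetSum fun i _ => hsummi i]
    refine tsum_congr fun l => ?_
    rw [hlLam (l+1), Finset.sum_mul]
  -- rewrite E[W g(W)]
  have hintI : ∀ i, Integrable (fun ω => (I i ω : ℝ) * g (W ω)) P := by
    intro i
    refine myIntBdd P _ ?_ C ?_
    · exact (((measurable_from_nat (f := (Nat.cast : ℕ → ℝ))).comp (hmeas i)).mul
        ((measurable_from_nat (f := g)).comp hWmeas)).aestronglyMeasurable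
    · refine Filter.Eventually.of_forall fun ω => ?_
      rw [abs_mul]
      calc |(I i ω : ℝ)| * |g (W ω)| ≤ 1 * C := by
            refine mul_le_mul ?_ (hg _) (abs_nonneg _) one_pos.le
            rw [abs_of_nonneg (Nat.cast_nonneg _)]
            exact_mod_cast h01 i ω
        _ = C := one_mul C
  have hWg : ∫ ω, (W ω : ℝ) * g (W ω) ∂P = ∑ i, ∫ ω, (I i ω : ℝ) * g (W ω) ∂P := by
    rw [← integral_finset_sum _ fun i _ => hintI i]
    refine integral_congr_ae (Filter.Eventually.of_forall fun ω => ?_)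
    show (W ω : ℝ) * g (W ω) = ∑ i, (I i ω : ℝ) * g (W ω)
    rw [hW ω]
    push_cast
    rw [Finset.sum_mul]
  rw [hts, hWg, ← Finset.sum_sub_distrib]
  have hDnn : 0 ≤ D := le_trans (abs_nonneg _) (hD 0)
  calc |∑ i, ((∑' l : ℕ, ((-1:ℝ)^(l+1+1) * (p i / (1 - p i))^(l+1)) * ∫ ω, g (W ω + (l+1)) ∂P)
          - ∫ ω, (I i ω : ℝ) * g (W ω) ∂P)|
      ≤ ∑ i, |(∑' l : ℕ, ((-1:ℝ)^(l+1+1) * (p i / (1 - p i))^(l+1)) * ∫ ω, g (W ω + (l+1)) ∂P)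
          - ∫ ω, (I i ω : ℝ) * g (W ω) ∂P| := Finset.abs_sum_le_sum_abs _ _
    _ ≤ ∑ i, p i / (1 - 2 * p i) * (∫ ω, |(Wt i ω : ℝ) - (Wi i ω : ℝ)| ∂P) * D := by
        refine Finset.sum_le_sum fun i _ => ?_
        exact myKey P (I i) W (Wi i) (Wt i) (hmeas i) hWmeas (hWimeas i) (hWtmeas i)
          (h01 i) (hIW i) n (hWiN i) (p i) (hp i) (hp0 i) (hp3 i) (hWt i) g C hg D hD
    _ = η₁ * D := by
        rw [hη₁, Finset.sum_mul]

end
end
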